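/- Let p be a prime number, F a field of characteristic p that is an algebraic extension of ℤ/pℤ, D_n = F[X^{1/p^n}, X^{-1/p^n}] and D = ⋃_{n≥0} D_n. Then every nonzero nonunit of D_n fails to be irreducible as an element of D_{n+1}; in particular, D has no irreducible element. -/

import Mathlib

set_option synthInstance.maxHeartbeats 1000000
set_option maxHeartbeats 1000000

open Polynomial AddMonoidAlgebra

noncomputable section

/-- The subgroup of `ℚ` generated by `{1/pⁿ : n ∈ ℕ}`. -/
def expGroup (p : ℕ) : AddSubgroup ℚ :=
  AddSubgroup.closure (Set.range fun n : ℕ => ((p : ℚ) ^ n)⁻¹)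

instance (p : ℕ) : UniqueSums (expGroup p) :=
  UniqueSums.of_injective_addHom ((expGroup p).subtype : _ →+ ℚ).toAddHom
    Subtype.val_injective inferInstance

/-- `D = ⋃_{n≥0} F[X^{1/pⁿ}, X^{-1/pⁿ}]`, realized as the group algebra `F[X;G]`
where `G` is the subgroup of `ℚ` generated by `{1/pⁿ : n ≥ 0}`. -/
abbrev LaurentUnion (F : Type*) [Field F] (p : ℕ) : Type _ :=
  AddMonoidAlgebra F (expGroup p)

instance (F : Type*) [Field F] (p : ℕ) : IsDomain (LaurentUnion F p) :=
  NoZeroDivisors.to_isDomain _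

/-- The element `1/pⁿ` of the subgroup `G`. -/
def expGen (p n : ℕ) : expGroup p :=
  ⟨((p : ℚ) ^ n)⁻¹, AddSubgroup.subset_closure ⟨n, rfl⟩⟩

/-- The monomial `X^{1/pⁿ}` in `D`. -/
def XRoot (F : Type*) [Field F] (p n : ℕ) : LaurentUnion F p :=
  AddMonoidAlgebra.single (expGen p n) 1

/-- The subring `Dₙ = F[X^{1/pⁿ}, X^{-1/pⁿ}]` of `D`, as a subalgebra. -/
def DSub (F : Type*) [Field F] (p n : ℕ) : Subalgebra F (LaurentUnion F p) :=
  Algebra.adjoin F {XRoot F p n, AddMonoidAlgebra.single (-expGen p n) 1}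

/-- The subring `Rₙ = F[X^{1/pⁿ}]` of `D`, as a subalgebra. -/
def RSub (F : Type*) [Field F] (p n : ℕ) : Subalgebra F (LaurentUnion F p) :=
  Algebra.adjoin F {XRoot F p n}

lemma XRoot_mem_DSub (F : Type*) [Field F] (p n : ℕ) : XRoot F p n ∈ DSub F p n :=
  Algebra.subset_adjoin (by simp)

lemma aeval_XRoot_mem_DSub (F : Type*) [Field F] (p n : ℕ) (f : Polynomial F) :
    Polynomial.aeval (XRoot F p n) f ∈ DSub F p n :=
  Algebra.adjoin_le (Set.singleton_subset_iff.mpr (XRoot_mem_DSub F p n))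
    (Polynomial.aeval_mem_adjoin_singleton _ _)

lemma aeval_XRoot_mem_RSub (F : Type*) [Field F] (p n : ℕ) (f : Polynomial F) :
    Polynomial.aeval (XRoot F p n) f ∈ RSub F p n :=
  Polynomial.aeval_mem_adjoin_singleton _ _

lemma XRoot_pow (F : Type*) [Field F] {p : ℕ} (hp : p ≠ 0) {m n : ℕ} (h : m ≤ n) :
    XRoot F p n ^ p ^ (n - m) = XRoot F p m := by
  rw [XRoot, XRoot, AddMonoidAlgebra.single_pow, one_pow]
  congr 1
  ext
  have hp' : (p : ℚ) ≠ 0 := Nat.cast_ne_zero.mpr hp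
  push_cast
  rw [nsmul_eq_mul]
  push_cast [expGen]
  field_simp
  rw [← pow_add, Nat.sub_add_cancel h]

lemma DSub_mono (F : Type*) [Field F] {p : ℕ} (hp : p ≠ 0) {m n : ℕ} (h : m ≤ n) :
    DSub F p m ≤ DSub F p n := by
  apply Algebra.adjoin_le
  rintro x (rfl | rfl)
  · rw [← XRoot_pow F hp h]
    exact pow_mem (Algebra.subset_adjoin (by simp)) _
  · rw [show (AddMonoidAlgebra.single (-expGen p m) 1 : LaurentUnion F p)
        = (AddMonoidAlgebra.single (-expGen p n) 1 : LaurentUnion F p) ^ p ^ (n - m) from ?_]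
    · exact pow_mem (Algebra.subset_adjoin (by simp)) _
    · rw [AddMonoidAlgebra.single_pow, one_pow]
      congr 1
      ext
      have hp' : (p : ℚ) ≠ 0 := Nat.cast_ne_zero.mpr hp
      push_cast
      rw [nsmul_eq_mul]
      push_cast [expGen]
      field_simp
      rw [← pow_add, Nat.add_sub_of_le h]

/-! ### Auxiliary machinery: the "p-th root" ring homomorphism on `D` -/

section PsiAux

lemma div_mem_expGroup {p : ℕ} {q : ℚ} (hq : q ∈ expGroup p) :
    q / p ∈ expGroup p := by
  induction hq using AddSubgroup.closure_induction with
  | mem x hx =>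
      obtain ⟨n, rfl⟩ := hx
      refine AddSubgroup.subset_closure ⟨n + 1, ?_⟩
      rw [div_eq_mul_inv, ← mul_inv, ← pow_succ]
  | zero => simpa using (expGroup p).zero_mem
  | add x y hx hy ihx ihy => simpa [add_div] using (expGroup p).add_mem ihx ihy
  | neg x hx ihx => simpa [neg_div] using (expGroup p).neg_mem ihx

/-- Division by `p` as an additive endomorphism of the exponent group. -/
def divHom (p : ℕ) : expGroup p →+ expGroup p where
  toFun g := ⟨(g : ℚ) / p, div_mem_expGroup g.2⟩
  map_zero' := by ext; simp
  map_add' a b := by ext; push_cast; ring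

variable (F : Type*) [Field F] (p : ℕ) [Fact p.Prime] [CharP F p] [PerfectRing F p]

/-- The `p`-th root homomorphism on `D`: `c·X^g ↦ c^{1/p}·X^{g/p}`. -/
def psi : LaurentUnion F p →+* LaurentUnion F p :=
  AddMonoidAlgebra.liftNCRingHom
    ((AddMonoidAlgebra.singleZeroRingHom).comp ((frobeniusEquiv F p).symm : F →+* F))
    { toFun := fun g => AddMonoidAlgebra.single (divHom p g.toAdd) 1
      map_one' := by
        show AddMonoidAlgebra.single ((divHom p) (Multiplicative.toAdd
          (1 : Multiplicative (expGroup p)))) 1 = 1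
        rw [toAdd_one, map_zero]
        rfl
      map_mul' := fun a b => by
        show AddMonoidAlgebra.single ((divHom p) (Multiplicative.toAdd (a * b))) 1
          = AddMonoidAlgebra.single ((divHom p) (Multiplicative.toAdd a)) 1
            * AddMonoidAlgebra.single ((divHom p) (Multiplicative.toAdd b)) 1
        rw [toAdd_mul, map_add, AddMonoidAlgebra.single_mul_single, one_mul] }
    (fun _ _ => Commute.all _ _)

lemma psi_single (g : expGroup p) (c : F) :
    psi F p (AddMonoidAlgebra.single g c)
      = AddMonoidAlgebra.single (divHom p g) ((frobeniusEquiv F p).symm c) := by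
  show AddMonoidAlgebra.liftNC _ _ _ = _
  rw [AddMonoidAlgebra.liftNC_single]
  show AddMonoidAlgebra.single 0 _ * AddMonoidAlgebra.single _ 1 = _
  rw [AddMonoidAlgebra.single_mul_single, zero_add, mul_one]
  rfl

lemma psi_pow_p (x : LaurentUnion F p) : psi F p x ^ p = x := by
  haveI : CharP (LaurentUnion F p) p :=
    charP_of_injective_algebraMap (algebraMap F (LaurentUnion F p)).injective p
  have hp : p.Prime := Fact.out
  have hpQ : (p : ℚ) ≠ 0 := Nat.cast_ne_zero.mpr hp.ne_zero
  have : (frobenius (LaurentUnion F p) p).comp (psi F p) = RingHom.id _ := by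
    apply AddMonoidAlgebra.ringHom_ext
    · intro b
      rw [RingHom.comp_apply, RingHom.id_apply, psi_single, map_zero, frobenius_def,
        AddMonoidAlgebra.single_pow, smul_zero, frobeniusEquiv_symm_pow_p]
    · intro a
      rw [RingHom.comp_apply, RingHom.id_apply, psi_single, map_one, frobenius_def,
        AddMonoidAlgebra.single_pow, one_pow]
      congr 1
      ext
      have hdiv : ((divHom p a : expGroup p) : ℚ) = (a : ℚ) / p := rfl
      push_cast [hdiv]
      field_simp
      rw [nsmul_eq_mul]; field_simp
  have := congrArg (fun f => f x) this
  simpa [frobenius_def] using this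

lemma divHom_expGen (n : ℕ) : divHom p (expGen p n) = expGen p (n + 1) := by
  have hp : p.Prime := Fact.out
  have hpQ : (p : ℚ) ≠ 0 := Nat.cast_ne_zero.mpr hp.ne_zero
  ext
  show ((p : ℚ) ^ n)⁻¹ / p = ((p : ℚ) ^ (n + 1))⁻¹
  rw [div_eq_mul_inv, ← mul_inv, ← pow_succ]

lemma psi_mem_DSub {n : ℕ} {a : LaurentUnion F p} (ha : a ∈ DSub F p n) :
    psi F p a ∈ DSub F p (n + 1) := by
  induction ha using Algebra.adjoin_induction with
  | mem x hx =>
      rcases hx with rfl | rfl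
      · rw [XRoot, psi_single, map_one, divHom_expGen]
        exact XRoot_mem_DSub F p (n + 1)
      · rw [psi_single, map_one, map_neg, divHom_expGen]
        exact Algebra.subset_adjoin (by simp)
  | algebraMap r =>
      have : (algebraMap F (LaurentUnion F p)) r = AddMonoidAlgebra.single 0 r := by
        rw [AddMonoidAlgebra.coe_algebraMap]; rfl
      rw [this, psi_single, map_zero]
      have : (AddMonoidAlgebra.single (0 : expGroup p) ((frobeniusEquiv F p).symm r)
          : LaurentUnion F p) = algebraMap F _ ((frobeniusEquiv F p).symm r) := by
        rw [AddMonoidAlgebra.coe_algebraMap]; rfl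
      rw [this]
      exact Subalgebra.algebraMap_mem _ _
  | add x y hx hy ihx ihy => rw [map_add]; exact add_mem ihx ihy
  | mul x y hx hy ihx ihy => rw [map_mul]; exact mul_mem ihx ihy

end PsiAux

/-- **Statement 13.** Let `p` be a prime and `F` a field of characteristic `p` that is
an algebraic extension of `ℤ/pℤ`.  Then every nonzero nonunit of `Dₙ` fails to be
irreducible in `D_{n+1}`; in particular `D = ⋃_{n≥0} F[X^{1/pⁿ}, X^{-1/pⁿ}]` has no
irreducible element. -/
theorem laurentUnion_no_irreducible_of_algebraic_over_zmod (F : Type*) [Field F]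
    (p : ℕ) (hp : p.Prime) (hchar : ringChar F = p)
    [Algebra (ZMod p) F] [Algebra.IsAlgebraic (ZMod p) F] :
    (∀ n : ℕ, ∀ a : DSub F p n, (a : LaurentUnion F p) ≠ 0 → ¬ IsUnit a →
      ¬ Irreducible (⟨(a : LaurentUnion F p),
        DSub_mono F hp.ne_zero (Nat.le_succ n) a.2⟩ : DSub F p (n + 1))) ∧
    ∀ b : LaurentUnion F p, ¬ Irreducible b := by
  haveI : CharP F p := by rw [← hchar]; exact ringChar.charP F
  haveI : Fact p.Prime := ⟨hp⟩
  haveI : PerfectField F := Algebra.IsAlgebraic.perfectField (K := ZMod p) (L := F)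
  have h1p : 1 ≤ p := hp.one_lt.le
  have hpm1 : p - 1 ≠ 0 := Nat.sub_ne_zero_of_lt hp.one_lt
  constructor
  · intro n a ha hau hirr
    set b : LaurentUnion F p := psi F p a.1 with hb
    have hbmem : b ∈ DSub F p (n + 1) := psi_mem_DSub F p a.2
    have key : (⟨(a : LaurentUnion F p), DSub_mono F hp.ne_zero (Nat.le_succ n) a.2⟩ :
        DSub F p (n + 1)) = ⟨b, hbmem⟩ * ⟨b, hbmem⟩ ^ (p - 1) := by
      apply Subtype.ext
      simp only [MulMemClass.coe_mul, SubmonoidClass.coe_pow]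
      rw [← pow_succ', Nat.sub_add_cancel h1p, hb, psi_pow_p]
    rcases hirr.isUnit_or_isUnit key with h | h
    · exact hirr.not_isUnit (key ▸ h.mul (h.pow _))
    · have h' := (isUnit_pow_iff hpm1).mp h
      exact hirr.not_isUnit (key ▸ h'.mul h)
  · intro b hirr
    have key : b = psi F p b * psi F p b ^ (p - 1) := by
      rw [← pow_succ', Nat.sub_add_cancel h1p, psi_pow_p]
    rcases hirr.isUnit_or_isUnit key with h | h
    · exact hirr.not_isUnit (key ▸ h.mul (h.pow _))
    · have h' := (isUnit_pow_iff hpm1).mp h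
      exact hirr.not_isUnit (key ▸ h'.mul h)
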